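/- Let G be a finite DAG whose vertices are partitioned into three disjoint sets X, Y, Z such that X and Y are d-separated by Z (classical d-separation). Then for every vertex v of G, either ({v} ∪ Pa(v)) ⊆ X ∪ Z or ({v} ∪ Pa(v)) ⊆ Y ∪ Z. -/

import Mathlib

open Classical

/-- Ancestors of a set `W` of vertices: all `u` with a directed path (possibly of
length 0) from `u` to some element of `W`. -/
def An {V : Type} (E : V → V → Prop) (W : Set V) : Set V :=
  {u | ∃ w ∈ W, Relation.ReflTransGen E u w}

/-- Parents of a vertex `v`. -/
def Pa {V : Type} (E : V → V → Prop) (v : V) : Set V := {u | E u v}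

/-- Acyclicity of a directed graph. -/
def IsAcyclicDigraph {V : Type} (E : V → V → Prop) : Prop :=
  ∀ v, ¬ Relation.TransGen E v v

/-- Marginal of a joint distribution `P` on `∏ v, X v` onto the coordinates in `S`,
evaluated at (the `S`-coordinates of) `x`. -/
noncomputable def marg {V : Type} [Fintype V] [DecidableEq V] {X : V → Type}
    [∀ v, Fintype (X v)] (P : (∀ v, X v) → ℝ) (S : Set V) (x : ∀ v, X v) : ℝ :=
  ∑ y : ∀ v, X v, if ∀ v ∈ S, y v = x v then P y else 0

/-- Conditional independence `A ⊥ B | S` for a finite joint distribution `P`: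
`P(a,b,s)·P(s) = P(a,s)·P(b,s)` for all values (phrased via marginals). -/
def CondIndep {V : Type} [Fintype V] [DecidableEq V] {X : V → Type}
    [∀ v, Fintype (X v)] (P : (∀ v, X v) → ℝ) (A B S : Set V) : Prop :=
  ∀ x : ∀ v, X v,
    marg P (A ∪ B ∪ S) x * marg P S x = marg P (A ∪ S) x * marg P (B ∪ S) x

/-- `P` factorizes according to the directed graph `E`: `P(x) = ∏ v K v (x)` for
stochastic kernels `K v` depending only on the coordinate `v` and its parents. -/
def Factorizes {V : Type} [Fintype V] [DecidableEq V] {X : V → Type}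
    [∀ v, Fintype (X v)] (E : V → V → Prop) (P : (∀ v, X v) → ℝ) : Prop :=
  ∃ K : (v : V) → (∀ u, X u) → ℝ,
    (∀ v x, 0 ≤ K v x) ∧
    (∀ v x, ∑ a : X v, K v (Function.update x v a) = 1) ∧
    (∀ v x x', x v = x' v → (∀ u, E u v → x u = x' u) → K v x = K v x') ∧
    (∀ x, P x = ∏ v, K v x)

/-- An undirected walk in the directed graph `E`. -/
def IsUWalk {V : Type} (E : V → V → Prop) (p : List V) : Prop :=
  p.Chain' fun a b => E a b ∨ E b a

/-- An undirected path `p` is blocked by `Z` (Pearl): it contains a chain or fork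
whose middle vertex is in `Z`, or a collider whose middle vertex is not an ancestor
of `Z`. -/
def Blocked {V : Type} (E : V → V → Prop) (Z : Set V) (p : List V) : Prop :=
  ∃ (i : ℕ) (a m b : V), p[i]? = some a ∧ p[i+1]? = some m ∧ p[i+2]? = some b ∧
    ((((E a m ∧ E m b) ∨ (E m a ∧ E b m) ∨ (E m a ∧ E m b)) ∧ m ∈ Z) ∨
      ((E a m ∧ E b m) ∧ m ∉ An E Z))

/-- Classical d-separation: every undirected path between `X` and `Y` is blocked
by `Z`. -/
def DSep {V : Type} (E : V → V → Prop) (X Y Z : Set V) : Prop :=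
  ∀ p : List V, IsUWalk E p → p.Nodup →
    (∃ x ∈ X, p.head? = some x) → (∃ y ∈ Y, p.getLast? = some y) → Blocked E Z p

/-- No direct edge (in either direction) between an `X`-vertex and a `Y`-vertex. -/
lemma no_edge_aux {V : Type} {E : V → V → Prop} {X Y Z : Set V}
    (hsep : DSep E X Y Z) {x y : V} (hx : x ∈ X) (hy : y ∈ Y) (hxy : x ≠ y)
    (he : E x y ∨ E y x) : False := by
  have hb := hsep [x, y] (by simpa [IsUWalk, List.Chain', List.isChain_cons_cons, List.isChain_singleton] using he) (by simp [hxy])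
      ⟨x, hx, rfl⟩ ⟨y, hy, rfl⟩
  obtain ⟨i, a, m, b, -, -, h2, -⟩ := hb
  have := (List.getElem?_eq_some_iff.mp h2).1
  simp at this

/-- No collider `x → z ← y` with `x ∈ X`, `y ∈ Y`, `z ∈ Z`. -/
lemma no_collider_aux {V : Type} {E : V → V → Prop} (hacyc : IsAcyclicDigraph E)
    {X Y Z : Set V}
    (hXY : Disjoint X Y) (hXZ : Disjoint X Z) (hYZ : Disjoint Y Z)
    (hsep : DSep E X Y Z) {x y z : V} (hx : x ∈ X) (hy : y ∈ Y) (hz : z ∈ Z)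
    (hxz : E x z) (hyz : E y z) : False := by
  have hxny : x ≠ y := fun h => hXY.ne_of_mem hx hy h
  have hxnz : x ≠ z := fun h => hXZ.ne_of_mem hx hz h
  have hynz : y ≠ z := fun h => hYZ.ne_of_mem hy hz h
  have hb := hsep [x, z, y] (by simp [IsUWalk, List.Chain', List.isChain_cons_cons, List.isChain_singleton]; exact ⟨Or.inl hxz, Or.inr hyz⟩)
      (by simp [hxny, hxnz, hynz, hynz.symm]) ⟨x, hx, rfl⟩ ⟨y, hy, rfl⟩
  obtain ⟨i, a, m, b, h0, h1, h2, hcase⟩ := hb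
  have hi : i + 2 < 3 := by simpa using (List.getElem?_eq_some_iff.mp h2).1
  have hi0 : i = 0 := by omega
  subst hi0
  simp at h0 h1 h2
  subst h0; subst h1; subst h2
  have hnzy : ¬ E z y := fun h => hacyc y (Relation.TransGen.head hyz (Relation.TransGen.single h))
  have hnzx : ¬ E z x := fun h => hacyc x (Relation.TransGen.head hxz (Relation.TransGen.single h))
  rcases hcase with ⟨(⟨_, h⟩ | ⟨h, _⟩ | ⟨h, _⟩), _⟩ | ⟨_, hAn⟩
  · exact hnzy h
  · exact hnzx h
  · exact hnzx h
  · exact hAn ⟨z, hz, Relation.ReflTransGen.refl⟩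

/-- Lemma 6.4 of Fritz–Klingler for DAGs: if the vertices of a finite DAG are
partitioned into disjoint sets `X`, `Y`, `Z` with `X` and `Y` d-separated by `Z`,
then every vertex together with its parents lies entirely in `X ∪ Z` or entirely in
`Y ∪ Z`. -/
theorem dsep_vertex_parents_dichotomy {V : Type} [Fintype V] [DecidableEq V]
    (E : V → V → Prop) (hacyc : IsAcyclicDigraph E)
    (X Y Z : Set V)
    (hXY : Disjoint X Y) (hXZ : Disjoint X Z) (hYZ : Disjoint Y Z)
    (hcover : X ∪ Y ∪ Z = Set.univ)
    (hsep : DSep E X Y Z) :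
    ∀ v : V, ({v} ∪ Pa E v ⊆ X ∪ Z) ∨ ({v} ∪ Pa E v ⊆ Y ∪ Z) := by
  intro v
  by_contra h
  push_neg at h
  obtain ⟨h1, h2⟩ := h
  rw [Set.not_subset] at h1 h2
  obtain ⟨b, hb, hbXZ⟩ := h1
  obtain ⟨a, ha, haYZ⟩ := h2
  have hmem : ∀ w : V, w ∈ X ∪ Y ∪ Z := by rw [hcover]; exact fun w => Set.mem_univ w
  have hbY : b ∈ Y := by
    rcases hmem b with (h | h) | h
    · exact absurd (Or.inl h) hbXZ
    · exact h
    · exact absurd (Or.inr h) hbXZ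
  have haX : a ∈ X := by
    rcases hmem a with (h | h) | h
    · exact h
    · exact absurd (Or.inl h) haYZ
    · exact absurd (Or.inr h) haYZ
  have hab : a ≠ b := fun h => hXY.ne_of_mem haX hbY h
  rcases ha with ha | ha <;> rcases hb with hb | hb
  · exact hab (ha.trans hb.symm)
  · -- a = v ∈ X, E b v
    subst ha
    exact no_edge_aux hsep haX hbY hab (Or.inr hb)
  · -- E a v, b = v ∈ Y
    subst hb
    exact no_edge_aux hsep haX hbY hab (Or.inl ha)
  · -- E a v, E b v
    rcases hmem v with (hv | hv) | hv
    · exact no_edge_aux hsep hv hbY (fun h => hXY.ne_of_mem hv hbY h) (Or.inr hb)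
    · exact no_edge_aux hsep haX hv (fun h => hXY.ne_of_mem haX hv h) (Or.inl ha)
    · exact no_collider_aux hacyc hXY hXZ hYZ hsep haX hbY hv ha hb
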